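/- For a non-decreasing right-continuous function m and continuous nonnegative function g on [0,∞), the condition 'mⱼ increases only when gⱼ = 0' (i.e., for all s < t, if g > 0 on [s,t] then m(s) = m(t)) is equivalent to ∫₀^∞ g(t) dm(t) = 0, where dm is the Lebesgue–Stieltjes measure of m. -/

import Mathlib

open Set MeasureTheory

theorem increases_only_when_zero_iff_integral_zero
    (g : ℝ → ℝ) (hg : Continuous g) (hgpos : ∀ t, 0 ≤ g t)
    (m : StieltjesFunction ℝ) (hm : Continuous m) (hm0 : m 0 = 0) :
    (∀ s t : ℝ, 0 ≤ s → s ≤ t → (∀ r ∈ Set.Icc s t, 0 < g r) → m s = m t)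
      ↔ ∫⁻ t in Set.Ici (0:ℝ), ENNReal.ofReal (g t) ∂m.measure = 0 := by
  have hatom : ∀ a : ℝ, m.measure {a} = 0 := by
    intro a
    rw [m.measure_singleton]
    have : Function.leftLim m a = m a :=
      m.mono.continuousWithinAt_Iio_iff_leftLim_eq.1 (hm.continuousAt).continuousWithinAt
    simp [this]
  have hmeas : Measurable fun t => ENNReal.ofReal (g t) :=
    ENNReal.measurable_ofReal.comp hg.measurable
  have hopen : IsOpen {t | 0 < g t} := isOpen_lt continuous_const hg
  -- the integral is zero iff the measure of the positivity set within Ici 0 is zero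
  have hiff : (∫⁻ t in Set.Ici (0:ℝ), ENNReal.ofReal (g t) ∂m.measure = 0)
      ↔ m.measure ({t | 0 < g t} ∩ Set.Ici 0) = 0 := by
    rw [lintegral_eq_zero_iff hmeas, Filter.EventuallyEq, ae_iff]
    have hset : {a | ¬ (fun t => ENNReal.ofReal (g t)) a = (0 : ℝ → ENNReal) a}
        = {t | 0 < g t} := by
      ext t
      simp only [Set.mem_setOf_eq, Pi.zero_apply, ENNReal.ofReal_eq_zero, not_le]
    rw [hset, Measure.restrict_apply hopen.measurableSet]
  rw [hiff]
  constructor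
  · -- forward: local nullity
    intro H
    apply measure_null_of_locally_null
    rintro x ⟨hgx, hx0⟩
    simp only [mem_setOf_eq] at hgx
    have hx0' : (0:ℝ) ≤ x := hx0
    obtain ⟨δ, hδ, hball⟩ := Metric.isOpen_iff.1 hopen x hgx
    obtain ⟨s0, hs0⟩ : ∃ s0, s0 = max (x - δ/2) 0 := ⟨_, rfl⟩
    obtain ⟨t0, ht0⟩ : ∃ t0, t0 = x + δ/2 := ⟨_, rfl⟩
    have h1 : x - δ/2 ≤ s0 := by rw [hs0]; exact le_max_left _ _
    have hs00 : 0 ≤ s0 := by rw [hs0]; exact le_max_right _ _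
    have hs0x : s0 ≤ x := by rw [hs0]; exact max_le (by linarith) hx0'
    have hxt0 : x < t0 := by rw [ht0]; linarith
    have hst : s0 ≤ t0 := le_trans hs0x hxt0.le
    have hsub : Set.Icc s0 t0 ⊆ {t | 0 < g t} := by
      intro r hr
      apply hball
      rw [Metric.mem_ball, Real.dist_eq, abs_sub_lt_iff]
      have hr1 := hr.1
      have hr2 := hr.2
      constructor <;> linarith
    have hms : m s0 = m t0 := H s0 t0 hs00 hst (fun r hr => hsub hr)
    refine ⟨Set.Icc s0 t0, ?_, ?_⟩
    · -- Icc s0 t0 ∈ 𝓝[S] x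
      have hsub2 : Set.Ioo (x - δ/2) t0 ∩ Set.Ici 0 ⊆ Set.Icc s0 t0 := by
        rintro r ⟨⟨hr1, hr2⟩, hr3⟩
        exact ⟨by rw [hs0]; exact max_le hr1.le hr3, hr2.le⟩
      have hmem : Set.Icc s0 t0 ∈ nhdsWithin x (Set.Ici 0) :=
        mem_nhdsWithin.2 ⟨Set.Ioo (x - δ/2) t0, isOpen_Ioo, ⟨by linarith, hxt0⟩, hsub2⟩
      exact Filter.le_def.1 (nhdsWithin_mono x inter_subset_right) _ hmem
    · -- measure zero
      have h1 : m.measure (Set.Icc s0 t0) ≤ m.measure {s0} + m.measure (Set.Ioc s0 t0) := by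
        refine le_trans (measure_mono ?_) (measure_union_le _ _)
        intro r hr
        rcases eq_or_lt_of_le hr.1 with h | h
        · exact Or.inl h.symm
        · exact Or.inr ⟨h, hr.2⟩
      rw [hatom, m.measure_Ioc, ← hms, sub_self, ENNReal.ofReal_zero, zero_add] at h1
      exact le_antisymm h1 zero_le
  · -- reverse
    intro h s t hs hst hpos
    have hsub : Set.Ioc s t ⊆ {t | 0 < g t} ∩ Set.Ici 0 := by
      rintro r ⟨h1, h2⟩
      exact ⟨hpos r ⟨h1.le, h2⟩, le_trans hs h1.le⟩
    have := measure_mono (μ := m.measure) hsub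
    rw [h, m.measure_Ioc, le_zero_iff, ENNReal.ofReal_eq_zero] at this
    exact le_antisymm (m.mono hst) (by linarith)
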